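/- arXiv:2305.13465 — 2 statements merged into one kernel-verified Lean document; each statement's English description precedes it below -/
import Mathlib

section
/- The largest eigenvalue of a symmetric tridiagonal matrix with zero diagonal and 0/1 off-diagonal entries equals 2·cos(π/(L+2)), where L is the maximal length of a consecutive run of 1's on the superdiagonal (with the convention that the matrix is the zero matrix if all off-diagonal entries are 0, in which case λ_max = 0 and L = 0). -/
open Real

lemma spec_iff_eigen {n : ℕ} (M : Matrix (Fin n) (Fin n) ℝ) (μ : ℝ) :
    μ ∈ spectrum ℝ M ↔ ∃ v, v ≠ 0 ∧ M.mulVec v = μ • v := by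
  rw [spectrum.mem_iff]
  rw [Matrix.isUnit_iff_isUnit_det, isUnit_iff_ne_zero, not_not,
    ← Matrix.exists_mulVec_eq_zero_iff]
  constructor
  · rintro ⟨v, hv, h⟩
    refine ⟨v, hv, ?_⟩
    have := h
    rw [Matrix.sub_mulVec, sub_eq_zero, Algebra.algebraMap_eq_smul_one,
      Matrix.smul_mulVec, Matrix.one_mulVec] at this
    exact this.symm
  · rintro ⟨v, hv, h⟩
    refine ⟨v, hv, ?_⟩
    rw [Matrix.sub_mulVec, sub_eq_zero, Algebra.algebraMap_eq_smul_one,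
      Matrix.smul_mulVec, Matrix.one_mulVec, h]

lemma trig_key (θ : ℝ) (a : ℝ) :
    Real.sin (a * θ) + Real.sin ((a + 2) * θ) = 2 * Real.cos θ * Real.sin ((a + 1) * θ) := by
  have h1 : (a + 2) * θ = (a + 1) * θ + θ := by ring
  have h2 : a * θ = (a + 1) * θ - θ := by ring
  rw [h1, h2, Real.sin_add, Real.sin_sub]
  ring

lemma fin_sum_ite (n m : ℕ) (h : ℕ → ℝ) :
    (∑ k : Fin n, if (k : ℕ) = m then h k else 0) = if m < n then h m else 0 := by
  by_cases hm : m < n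
  · rw [if_pos hm, Finset.sum_eq_single ⟨m, hm⟩]
    · simp
    · intro k _ hk
      rw [if_neg]
      simp only [ne_eq, Fin.ext_iff] at hk
      exact hk
    · simp
  · rw [if_neg hm]
    apply Finset.sum_eq_zero
    intro k _
    rw [if_neg]
    omega

lemma mulVec_tridiag {n : ℕ} (x : ℕ → ℝ) (A : Matrix (Fin n) (Fin n) ℝ)
    (hA : ∀ i j : Fin n, A i j =
      if (j : ℕ) = i + 1 then x i
      else if (i : ℕ) = j + 1 then x j
      else 0)
    (g : ℕ → ℝ) (hg : ∀ m, n ≤ m → g m = 0) (j : Fin n) :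
    A.mulVec (fun k : Fin n => g k) j
      = x j * g ((j : ℕ) + 1)
        + (if (j : ℕ) = 0 then 0 else x ((j : ℕ) - 1) * g ((j : ℕ) - 1)) := by
  unfold Matrix.mulVec dotProduct
  have hsplit : ∀ k : Fin n, A j k * g k
      = (if (k : ℕ) = (j : ℕ) + 1 then x j * g k else 0)
        + (if (k : ℕ) = (j : ℕ) - 1 ∧ (j : ℕ) ≠ 0 then x k * g k else 0) := by
    intro k
    rw [hA]
    rcases eq_or_ne (k : ℕ) ((j : ℕ) + 1) with h1 | h1
    · rw [if_pos h1, if_pos h1, if_neg (by omega), add_zero]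
    · rw [if_neg h1, if_neg h1, zero_add]
      rcases eq_or_ne ((j : ℕ)) ((k : ℕ) + 1) with h2 | h2
      · rw [if_pos h2, if_pos ⟨by omega, by omega⟩]
      · rw [if_neg h2, if_neg (by omega), zero_mul]
  rw [Finset.sum_congr rfl (fun k _ => hsplit k), Finset.sum_add_distrib]
  congr 1
  · have := fin_sum_ite n ((j : ℕ) + 1) (fun m => x j * g m)
    beta_reduce at this
    rw [this]
    by_cases h : (j : ℕ) + 1 < n
    · rw [if_pos h]
    · rw [if_neg h, hg _ (by omega), mul_zero]
  · by_cases h0 : (j : ℕ) = 0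
    · rw [if_pos h0]
      apply Finset.sum_eq_zero
      intro k _
      rw [if_neg (by simp [h0])]
    · rw [if_neg h0]
      have : ∀ k : Fin n, (if (k : ℕ) = (j : ℕ) - 1 ∧ (j : ℕ) ≠ 0 then x k * g k else 0)
          = (if (k : ℕ) = (j : ℕ) - 1 then x k * g k else 0) := by
        intro k
        by_cases hk : (k : ℕ) = (j : ℕ) - 1
        · rw [if_pos ⟨hk, h0⟩, if_pos hk]
        · rw [if_neg (fun h => hk h.1), if_neg hk]
      rw [Finset.sum_congr rfl (fun k _ => this k),
        fin_sum_ite n ((j : ℕ) - 1) (fun m => x m * g m), if_pos (by omega)]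

noncomputable def runlen (x : ℕ → ℝ) : ℕ → ℕ :=
  fun j => Nat.rec 0 (fun j r => if x j = 1 then r + 1 else 0) j

lemma runlen_zero (x : ℕ → ℝ) : runlen x 0 = 0 := rfl

lemma runlen_succ (x : ℕ → ℝ) (j : ℕ) :
    runlen x (j + 1) = if x j = 1 then runlen x j + 1 else 0 := rfl

lemma runlen_succ_of_one (x : ℕ → ℝ) (j : ℕ) (h : x j = 1) :
    runlen x (j + 1) = runlen x j + 1 := by
  rw [runlen_succ, if_pos h]

lemma runlen_prop (x : ℕ → ℝ) (j : ℕ) :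
    runlen x j ≤ j ∧ ∀ i < runlen x j, x (j - runlen x j + i) = 1 := by
  induction j with
  | zero => exact ⟨le_refl 0, fun i hi => absurd hi (by simp [runlen_zero])⟩
  | succ j ih =>
    by_cases h : x j = 1
    · rw [runlen_succ_of_one x j h]
      refine ⟨by omega, fun i hi => ?_⟩
      rcases Nat.lt_or_ge i (runlen x j) with hi' | hi'
      · have heq : j + 1 - (runlen x j + 1) + i = j - runlen x j + i := by omega
        rw [heq]
        exact ih.2 i hi'
      · have hi2 : i = runlen x j := by omega
        have heq : j + 1 - (runlen x j + 1) + i = j := by omega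
        rw [heq]
        exact h
    · rw [runlen_succ, if_neg h]
      exact ⟨Nat.zero_le _, fun i hi => absurd hi (by omega)⟩

/-- The largest eigenvalue of a symmetric tridiagonal matrix with zero diagonal
and 0/1 off-diagonal entries `x_i` equals `2·cos(π/(L+2))`, where `L` is the
maximal length of a consecutive run of 1's among the off-diagonal entries
(`L = 0` if all `x_i` are 0, in which case the matrix is zero and the largest
eigenvalue is `2·cos(π/2) = 0`). -/
theorem tridiag_zero_one_largest_eigenvalue (n : ℕ) (hn : 1 ≤ n)
    (x : ℕ → ℝ) (hx : ∀ i, x i = 0 ∨ x i = 1)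
    (A : Matrix (Fin n) (Fin n) ℝ)
    (hA : ∀ i j : Fin n, A i j =
      if (j : ℕ) = i + 1 then x i
      else if (i : ℕ) = j + 1 then x j
      else 0)
    (L : ℕ)
    (hL : IsGreatest {k : ℕ | ∃ s, s + k ≤ n - 1 ∧ ∀ i < k, x (s + i) = 1} L) :
    IsGreatest (spectrum ℝ A) (2 * Real.cos (π / (L + 2))) := by
  obtain ⟨⟨s, hs1, hs2⟩, hLub⟩ := hL
  set θ : ℝ := π / (L + 2) with hθ
  have hden : (0:ℝ) < (L:ℝ) + 2 := by positivity
  have hθpos : 0 < θ := by rw [hθ]; positivity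
  have hθpi : ((L:ℝ) + 2) * θ = π := by rw [hθ]; field_simp
  have hsinnn : ∀ m : ℕ, m ≤ L + 2 → 0 ≤ Real.sin ((m : ℝ) * θ) := by
    intro m hm
    apply Real.sin_nonneg_of_nonneg_of_le_pi
    · positivity
    · rw [← hθpi]
      apply mul_le_mul_of_nonneg_right _ hθpos.le
      exact_mod_cast hm
  have hsinpos : ∀ m : ℕ, 1 ≤ m → m ≤ L + 1 → 0 < Real.sin ((m : ℝ) * θ) := by
    intro m h1 h2
    apply Real.sin_pos_of_pos_of_lt_pi
    · have : (0:ℝ) < (m:ℝ) := by exact_mod_cast h1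
      positivity
    · rw [← hθpi]
      apply mul_lt_mul_of_pos_right _ hθpos
      have : (m:ℝ) ≤ (L:ℝ) + 1 := by exact_mod_cast h2
      linarith
  have hleft : 1 ≤ s → x (s - 1) = 0 := by
    intro hs
    by_contra hne
    have hone : x (s-1) = 1 := (hx _).resolve_left hne
    have hmem : L + 1 ∈ {k : ℕ | ∃ t, t + k ≤ n - 1 ∧ ∀ i < k, x (t + i) = 1} := by
      refine ⟨s - 1, by omega, fun i hi => ?_⟩
      rcases Nat.eq_zero_or_pos i with h0 | h0
      · rw [h0, add_zero]; exact hone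
      · have heq : s - 1 + i = s + (i - 1) := by omega
        rw [heq]; exact hs2 (i-1) (by omega)
    have := hLub hmem
    omega
  have hright : s + L + 1 < n → x (s + L) = 0 := by
    intro hsn
    by_contra hne
    have hone : x (s+L) = 1 := (hx _).resolve_left hne
    have hmem : L + 1 ∈ {k : ℕ | ∃ t, t + k ≤ n - 1 ∧ ∀ i < k, x (t + i) = 1} := by
      refine ⟨s, by omega, fun i hi => ?_⟩
      rcases Nat.lt_or_ge i L with h | h
      · exact hs2 i h
      · have heq : i = L := by omega
        rw [heq]; exact hone
    have := hLub hmem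
    omega
  constructor
  · -- membership
    rw [spec_iff_eigen]
    obtain ⟨g, hgval⟩ : ∃ g : ℕ → ℝ,
        ∀ m, g m = if s ≤ m ∧ m ≤ s + L then Real.sin (((m - s + 1 : ℕ) : ℝ) * θ) else 0 :=
      ⟨_, fun m => rfl⟩
    have hg0 : ∀ m, n ≤ m → g m = 0 := by
      intro m hm; rw [hgval]; exact if_neg (by omega)
    refine ⟨fun k : Fin n => g k, ?_, ?_⟩
    · intro h0
      have hgs : g s = 0 := congrFun h0 ⟨s, by omega⟩
      rw [hgval, if_pos ⟨le_refl s, by omega⟩] at hgs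
      have hss : s - s + 1 = 1 := by omega
      rw [hss] at hgs
      have := hsinpos 1 le_rfl (by omega)
      rw [hgs] at this
      exact lt_irrefl 0 this
    · funext j
      rw [mulVec_tridiag x A hA g hg0 j]
      have hjn : (j : ℕ) < n := j.isLt
      show _ = (2 * Real.cos θ) * g (j : ℕ)
      rcases Nat.lt_or_ge (j : ℕ) s with hcase | hcase
      · -- left of the run
        have hgj : g (j : ℕ) = 0 := by rw [hgval]; exact if_neg (by omega)
        have ht1 : x (j:ℕ) * g ((j:ℕ)+1) = 0 := by
          by_cases h1 : (j:ℕ) + 1 = s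
          · have hje : (j:ℕ) = s - 1 := by omega
            rw [hje, hleft (by omega), zero_mul]
          · rw [hgval ((j:ℕ)+1), if_neg (by omega), mul_zero]
        have ht2 : (if (j:ℕ) = 0 then (0:ℝ) else x ((j:ℕ)-1) * g ((j:ℕ)-1)) = 0 := by
          by_cases hj0 : (j:ℕ) = 0
          · rw [if_pos hj0]
          · rw [if_neg hj0, hgval ((j:ℕ)-1), if_neg (by omega), mul_zero]
        rw [ht1, ht2, hgj, mul_zero, add_zero]
      rcases Nat.lt_or_ge (s + L) (j : ℕ) with hcase2 | hcase2
      · -- right of the run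
        have hgj : g (j : ℕ) = 0 := by rw [hgval]; exact if_neg (by omega)
        have ht1 : x (j:ℕ) * g ((j:ℕ)+1) = 0 := by
          rw [hgval ((j:ℕ)+1), if_neg (by omega), mul_zero]
        have ht2 : (if (j:ℕ) = 0 then (0:ℝ) else x ((j:ℕ)-1) * g ((j:ℕ)-1)) = 0 := by
          by_cases hj0 : (j:ℕ) = 0
          · rw [if_pos hj0]
          · rw [if_neg hj0]
            by_cases h1 : (j:ℕ) = s + L + 1
            · have hje : (j:ℕ) - 1 = s + L := by omega
              rw [hje, hright (by omega), zero_mul]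
            · rw [hgval ((j:ℕ)-1), if_neg (by omega), mul_zero]
        rw [ht1, ht2, hgj, mul_zero, add_zero]
      · -- inside the run
        obtain ⟨k, hk, hkL⟩ : ∃ k, (j:ℕ) = s + k ∧ k ≤ L := ⟨(j:ℕ) - s, by omega, by omega⟩
        have hgj : g (j : ℕ) = Real.sin (((k+1:ℕ):ℝ) * θ) := by
          rw [hgval, if_pos ⟨by omega, by omega⟩]
          have heq : (j:ℕ) - s + 1 = k + 1 := by omega
          rw [heq]
        have ht1 : x (j:ℕ) * g ((j:ℕ)+1) = Real.sin (((k+2:ℕ):ℝ) * θ) := by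
          rcases Nat.lt_or_ge k L with hkl | hkl
          · have hx1 : x (j:ℕ) = 1 := by rw [hk]; exact hs2 k hkl
            have hg1 : g ((j:ℕ)+1) = Real.sin (((k+2:ℕ):ℝ)*θ) := by
              rw [hgval, if_pos ⟨by omega, by omega⟩]
              have heq : (j:ℕ) + 1 - s + 1 = k + 2 := by omega
              rw [heq]
            rw [hx1, hg1, one_mul]
          · have hkeq : k = L := by omega
            have hg1 : g ((j:ℕ)+1) = 0 := by rw [hgval]; exact if_neg (by omega)
            have hsin : Real.sin (((k+2:ℕ):ℝ)*θ) = 0 := by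
              rw [hkeq]
              have heq : ((L+2:ℕ):ℝ) * θ = π := by push_cast; rw [hθpi]
              rw [heq, Real.sin_pi]
            rw [hg1, hsin, mul_zero]
        have ht2 : (if (j:ℕ) = 0 then (0:ℝ) else x ((j:ℕ)-1) * g ((j:ℕ)-1))
            = Real.sin (((k:ℕ):ℝ) * θ) := by
          rcases Nat.eq_zero_or_pos k with hk0 | hk0
          · have hz : Real.sin (((k:ℕ):ℝ)*θ) = 0 := by rw [hk0]; simp
            rw [hz]
            by_cases hj0 : (j:ℕ) = 0
            · rw [if_pos hj0]
            · rw [if_neg hj0, hgval ((j:ℕ)-1), if_neg (by omega), mul_zero]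
          · have hj0 : (j:ℕ) ≠ 0 := by omega
            rw [if_neg hj0]
            have hx1 : x ((j:ℕ)-1) = 1 := by
              have heq : (j:ℕ) - 1 = s + (k-1) := by omega
              rw [heq]; exact hs2 (k-1) (by omega)
            have hg1 : g ((j:ℕ)-1) = Real.sin (((k:ℕ):ℝ)*θ) := by
              rw [hgval, if_pos ⟨by omega, by omega⟩]
              have heq : (j:ℕ) - 1 - s + 1 = k := by omega
              rw [heq]
            rw [hx1, hg1, one_mul]
        rw [ht1, ht2, hgj]
        have htrig := trig_key θ (k : ℝ)
        push_cast
        push_cast at htrig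
        linarith
  · -- upper bound
    rintro μ hμ
    obtain ⟨v, hv0, hveq⟩ := (spec_iff_eigen A μ).1 hμ
    obtain ⟨W, hWval⟩ : ∃ W : ℕ → ℝ,
        ∀ m, W m = if m < n then Real.sin (((runlen x m + 1 : ℕ):ℝ) * θ) else 0 :=
      ⟨_, fun m => rfl⟩
    have hW0 : ∀ m, n ≤ m → W m = 0 := by
      intro m hm; rw [hWval]; exact if_neg (by omega)
    have hrle : ∀ m, m < n → runlen x m ≤ L := by
      intro m hm
      have hp := runlen_prop x m
      refine hLub ⟨m - runlen x m, by omega, fun i hi => hp.2 i hi⟩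
    have hWpos : ∀ m, m < n → 0 < W m := by
      intro m hm
      rw [hWval, if_pos hm]
      exact hsinpos (runlen x m + 1) (by omega) (by have := hrle m hm; omega)
    have hkey : ∀ j : Fin n, A.mulVec (fun k : Fin n => W k) j ≤ (2*Real.cos θ) * W (j : ℕ) := by
      intro j
      rw [mulVec_tridiag x A hA W hW0 j]
      have hjn : (j:ℕ) < n := j.isLt
      have hr := hrle (j:ℕ) hjn
      have ht1 : x (j:ℕ) * W ((j:ℕ)+1) ≤ Real.sin (((runlen x (j:ℕ) + 2 : ℕ):ℝ) * θ) := by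
        have hnn : 0 ≤ Real.sin (((runlen x (j:ℕ)+2:ℕ):ℝ) * θ) := hsinnn _ (by omega)
        rcases hx (j:ℕ) with h | h
        · rw [h, zero_mul]; exact hnn
        · rw [h, one_mul, hWval]
          by_cases hn1 : (j:ℕ)+1 < n
          · rw [if_pos hn1, runlen_succ_of_one x (j:ℕ) h]
          · rw [if_neg hn1]; exact hnn
      have ht2 : (if (j:ℕ) = 0 then (0:ℝ) else x ((j:ℕ)-1) * W ((j:ℕ)-1))
          ≤ Real.sin (((runlen x (j:ℕ) : ℕ):ℝ) * θ) := by
        have hnn : 0 ≤ Real.sin (((runlen x (j:ℕ):ℕ):ℝ)*θ) := hsinnn _ (by omega)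
        by_cases hj0 : (j:ℕ) = 0
        · rw [if_pos hj0]; exact hnn
        · rw [if_neg hj0]
          rcases hx ((j:ℕ)-1) with h | h
          · rw [h, zero_mul]; exact hnn
          · rw [h, one_mul, hWval, if_pos (by omega)]
            have hsucc : runlen x ((j:ℕ)-1+1) = runlen x ((j:ℕ)-1) + 1 :=
              runlen_succ_of_one x _ h
            have hj1 : (j:ℕ)-1+1 = (j:ℕ) := by omega
            rw [hj1] at hsucc
            rw [hsucc]
      have hW : W (j:ℕ) = Real.sin (((runlen x (j:ℕ)+1:ℕ):ℝ)*θ) := by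
        rw [hWval, if_pos hjn]
      have htrig := trig_key θ (runlen x (j:ℕ) : ℝ)
      rw [hW]
      push_cast at ht1 ht2 htrig ⊢
      linarith
    have hAsymm : ∀ i j : Fin n, A i j = A j i := by
      intro i j
      rw [hA, hA]
      by_cases h1 : (j:ℕ) = (i:ℕ)+1
      · rw [if_pos h1, if_neg (by omega), if_pos h1]
      · by_cases h2 : (i:ℕ) = (j:ℕ)+1
        · rw [if_neg h1, if_pos h2, if_pos h2]
        · rw [if_neg h1, if_neg h2, if_neg h2, if_neg h1]
    have hAnn : ∀ i j : Fin n, 0 ≤ A i j := by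
      intro i j
      rw [hA]
      split_ifs
      · rcases hx (i:ℕ) with h|h <;> rw [h] <;> norm_num
      · rcases hx (j:ℕ) with h|h <;> rw [h] <;> norm_num
      · exact le_refl 0
    obtain ⟨j0, hj0⟩ : ∃ j : Fin n, v j ≠ 0 := by
      by_contra h
      push_neg at h
      exact hv0 (funext fun j => h j)
    have hSpos : 0 < ∑ k : Fin n, W (k:ℕ) * |v k| := by
      apply Finset.sum_pos'
      · exact fun k _ => mul_nonneg (hWpos k k.isLt).le (abs_nonneg _)
      · exact ⟨j0, Finset.mem_univ _,
          mul_pos (hWpos _ j0.isLt) (abs_pos.2 hj0)⟩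
    have step1 : |μ| * ∑ k : Fin n, W (k:ℕ) * |v k|
        ≤ (2*Real.cos θ) * ∑ k : Fin n, W (k:ℕ) * |v k| := by
      calc |μ| * ∑ k : Fin n, W (k:ℕ) * |v k|
          = ∑ k : Fin n, W (k:ℕ) * |μ * v k| := by
            rw [Finset.mul_sum]
            apply Finset.sum_congr rfl
            intro k _
            rw [abs_mul]
            ring
        _ = ∑ k : Fin n, W (k:ℕ) * |(A.mulVec v) k| := by
            apply Finset.sum_congr rfl
            intro k _
            rw [hveq]
            rfl
        _ ≤ ∑ k : Fin n, W (k:ℕ) * (∑ l : Fin n, A k l * |v l|) := by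
            apply Finset.sum_le_sum
            intro k _
            apply mul_le_mul_of_nonneg_left _ (hWpos k k.isLt).le
            calc |(A.mulVec v) k| = |∑ l : Fin n, A k l * v l| := rfl
              _ ≤ ∑ l : Fin n, |A k l * v l| := Finset.abs_sum_le_sum_abs _ _
              _ = ∑ l : Fin n, A k l * |v l| := by
                  apply Finset.sum_congr rfl
                  intro l _
                  rw [abs_mul, abs_of_nonneg (hAnn k l)]
        _ = ∑ l : Fin n, (∑ k : Fin n, A l k * W (k:ℕ)) * |v l| := by
            simp_rw [Finset.mul_sum, Finset.sum_mul]
            rw [Finset.sum_comm]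
            apply Finset.sum_congr rfl
            intro l _
            apply Finset.sum_congr rfl
            intro k _
            rw [hAsymm l k]
            ring
        _ = ∑ l : Fin n, (A.mulVec (fun k : Fin n => W (k:ℕ)) l) * |v l| := rfl
        _ ≤ ∑ l : Fin n, ((2*Real.cos θ) * W (l:ℕ)) * |v l| := by
            apply Finset.sum_le_sum
            intro l _
            exact mul_le_mul_of_nonneg_right (hkey l) (abs_nonneg _)
        _ = (2*Real.cos θ) * ∑ k : Fin n, W (k:ℕ) * |v k| := by
            rw [Finset.mul_sum]
            apply Finset.sum_congr rfl
            intro k _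
            ring
    have habs : |μ| ≤ 2*Real.cos θ := le_of_mul_le_mul_right step1 hSpos
    exact le_trans (le_abs_self μ) habs
end

section
/- For 0 < p < 1, the asymptotic solution of the equation (2δ^{3/2}/g³)·e^{−g/√δ} = 1/N in δ as N → ∞ satisfies δ ~ (g/ln N)², i.e., δ·(ln N)²/g² → 1, where g > 0 is a fixed constant. -/
open Real Filter

/-- Fix `g > 0` (and `0 < p < 1`). If `δ(N)` solves
`(2δ^{3/2}/g³)·e^{−g/√δ} = 1/N` with `δ(N) → 0`, then `δ(N) ~ (g/ln N)²`,
i.e. `δ(N)·(ln N)²/g² → 1` as `N → ∞`. -/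
theorem lifshitz_gap_asymptotics (p g : ℝ) (hp0 : 0 < p) (hp1 : p < 1) (hg : 0 < g)
    (δ : ℕ → ℝ) (hpos : ∀ N, 0 < δ N)
    (heq : ∀ N : ℕ, 1 ≤ N →
      (2 * (δ N) ^ ((3 : ℝ) / 2) / g ^ 3) * Real.exp (-g / Real.sqrt (δ N)) =
        1 / N)
    (hto0 : Tendsto δ atTop (nhds 0)) :
    Tendsto (fun N : ℕ => δ N * (Real.log N) ^ 2 / g ^ 2) atTop (nhds 1) := by
  set u : ℕ → ℝ := fun N => g / Real.sqrt (δ N) with hu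
  have hupos : ∀ N, 0 < u N := fun N => div_pos hg (Real.sqrt_pos.2 (hpos N))
  have hutop : Tendsto u atTop atTop := by
    have hs : Tendsto (fun N => Real.sqrt (δ N)) atTop (nhdsWithin 0 (Set.Ioi 0)) := by
      apply tendsto_nhdsWithin_of_tendsto_nhds_of_eventually_within
      · simpa [Function.comp_def] using (Real.continuous_sqrt.tendsto 0).comp hto0
      · exact Eventually.of_forall fun N => Real.sqrt_pos.2 (hpos N)
    have h2 : Tendsto (fun x : ℝ => g / x) (nhdsWithin 0 (Set.Ioi 0)) atTop := by
      simpa [div_eq_mul_inv] using (tendsto_inv_nhdsGT_zero).const_mul_atTop hg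
    exact h2.comp hs
  have key : ∀ N : ℕ, 1 ≤ N → Real.log N = u N + 3 * Real.log (u N) - Real.log 2 := by
    intro N hN
    have hδ := hpos N
    have hs : (0:ℝ) < Real.sqrt (δ N) := Real.sqrt_pos.2 hδ
    have h1 := congrArg Real.log (heq N hN)
    rw [Real.log_mul (by positivity) (Real.exp_ne_zero _), Real.log_exp,
      Real.log_div (by positivity) (by positivity),
      Real.log_mul (by norm_num) (by positivity),
      Real.log_rpow hδ, Real.log_pow, one_div, Real.log_inv, neg_div] at h1
    push_cast at h1
    have hlogδ : Real.log (δ N) = 2 * Real.log (Real.sqrt (δ N)) := by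
      rw [Real.log_sqrt hδ.le]; ring
    have hlogu : Real.log (u N) = Real.log g - Real.log (Real.sqrt (δ N)) :=
      Real.log_div hg.ne' hs.ne'
    have hun : u N = g / Real.sqrt (δ N) := rfl
    rw [hlogδ] at h1
    rw [hun, hlogu]
    linarith [h1]
  have h2 : Tendsto (fun N : ℕ => Real.log N / u N) atTop (nhds 1) := by
    have hl : Tendsto (fun x : ℝ => Real.log x / x) atTop (nhds 0) := by
      simpa using Real.tendsto_pow_log_div_mul_add_atTop 1 0 1 one_ne_zero
    have h3 : Tendsto (fun N => Real.log (u N) / u N) atTop (nhds 0) := hl.comp hutop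
    have h4 : Tendsto (fun N : ℕ => Real.log 2 / u N) atTop (nhds 0) :=
      tendsto_const_nhds.div_atTop hutop
    have h5 : Tendsto (fun N : ℕ => 1 + 3 * (Real.log (u N) / u N) - Real.log 2 / u N)
        atTop (nhds 1) := by
      have := (tendsto_const_nhds (x := (1:ℝ)) (f := atTop (α := ℕ))).add
        ((h3.const_mul 3)) |>.sub h4
      simpa using this
    refine h5.congr' ?_
    filter_upwards [eventually_ge_atTop 1] with N hN
    rw [key N hN, sub_div, add_div, div_self (hupos N).ne', mul_div_assoc]
  have hfe : ∀ N : ℕ, δ N * (Real.log N) ^ 2 / g ^ 2 = (Real.log N / u N) ^ 2 := by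
    intro N
    have hδ := hpos N
    have hu2 : (u N) ^ 2 = g ^ 2 / δ N := by
      rw [hu]; simp only []
      rw [div_pow, Real.sq_sqrt hδ.le]
    rw [div_pow, hu2]
    field_simp
  have := h2.pow 2
  simpa [hfe] using this
end
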